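/- The UBCS payment is strategy-proof: for every path i, every VOT β with β_{i−1} ≤ β ≤ β_i, and every path j, reporting truthfully (hence being assigned path i) costs no more than misreporting (hence being assigned path j): T_i·β + P_i ≤ T_j·β + P_j. (Strategy-proofness part of Theorem 1.) -/

import Mathlib

open Finset

lemma sum_Icc_bot (f : ℕ → ℝ) (a b : ℕ) (h : a ≤ b) :
    ∑ x ∈ Icc a b, f x = f a + ∑ x ∈ Icc (a+1) b, f x := by
  rw [Finset.Icc_add_one_left_eq_Ioc, ← Finset.sum_insert (by simp), Finset.Ioc_insert_left h]

lemma ubcs_step (n : ℕ) (T β ρ P : ℕ → ℝ)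
    (hρ1 : ∑ h ∈ Icc 1 n, ρ h = 1)
    (hP : ∀ i, 1 ≤ i → i ≤ n →
      P i = ∑ h ∈ Icc 1 (i - 1), ρ h * ∑ g ∈ Icc (h + 1) i, (T (g - 1) - T g) * β (g - 1)
          - ∑ h ∈ Icc (i + 1) n, ρ h * ∑ g ∈ Icc (i + 1) h, (T (g - 1) - T g) * β (g - 1))
    (j : ℕ) (hj1 : 1 ≤ j) (hjn : j + 1 ≤ n) :
    P (j+1) = P j + (T j - T (j+1)) * β j := by
  obtain ⟨k, rfl⟩ : ∃ k, j = k + 1 := ⟨j - 1, by omega⟩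
  set S : ℕ → ℝ := fun g => (T (g - 1) - T g) * β (g - 1) with hS
  have hSj : S (k+2) = (T (k+1) - T (k+2)) * β (k+1) := by simp [hS]
  rw [hP (k+2) (by omega) hjn, hP (k+1) (by omega) (by omega)]
  simp only [show k + 2 - 1 = k + 1 from rfl, show k + 1 - 1 = k from rfl,
    show k + 2 + 1 = k + 3 from rfl, show k + 1 + 1 = k + 2 from rfl]
  -- first sums
  have e1 : ∀ h ∈ Icc 1 (k+1), ρ h * ∑ g ∈ Icc (h+1) (k+2), S g
      = ρ h * ∑ g ∈ Icc (h+1) (k+1), S g + ρ h * S (k+2) := by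
    intro h hh
    rw [Finset.sum_Icc_succ_top (by simp at hh; omega), mul_add]
  rw [Finset.sum_congr rfl e1, Finset.sum_add_distrib]
  have e2 : ∑ h ∈ Icc 1 (k+1), ρ h * ∑ g ∈ Icc (h+1) (k+1), S g
      = ∑ h ∈ Icc 1 k, ρ h * ∑ g ∈ Icc (h+1) (k+1), S g := by
    rw [Finset.sum_Icc_succ_top (by omega)]
    simp [Finset.Icc_eq_empty (show ¬ (k+1+1 ≤ k+1) by omega)]
  rw [e2]
  -- second sums
  have e3 : ∑ h ∈ Icc (k+2) n, ρ h * ∑ g ∈ Icc (k+2) h, S g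
      = ρ (k+2) * ∑ g ∈ Icc (k+2) (k+2), S g
        + ∑ h ∈ Icc (k+3) n, ρ h * ∑ g ∈ Icc (k+2) h, S g := by
    exact sum_Icc_bot _ _ _ hjn
  have e4 : ∀ h ∈ Icc (k+3) n, ρ h * ∑ g ∈ Icc (k+2) h, S g
      = ρ h * S (k+2) + ρ h * ∑ g ∈ Icc (k+3) h, S g := by
    intro h hh
    rw [sum_Icc_bot _ _ _ (by simp at hh; omega), mul_add]
  rw [e3, Finset.sum_congr rfl e4, Finset.sum_add_distrib]
  have e5 : ∑ g ∈ Icc (k+2) (k+2), S g = S (k+2) := by simp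
  rw [e5]
  -- ρ partition
  have part : ∑ h ∈ Icc 1 (k+1), ρ h + ρ (k+2) + ∑ h ∈ Icc (k+3) n, ρ h = 1 := by
    rw [← hρ1]
    have h1 : Icc 1 (k+1) = Ioc 0 (k+1) := by exact Finset.Icc_add_one_left_eq_Ioc ..
    have h2 : Icc (k+3) n = Ioc (k+2) n := by exact Finset.Icc_add_one_left_eq_Ioc ..
    have h3 : Icc 1 n = Ioc 0 n := by exact Finset.Icc_add_one_left_eq_Ioc ..
    rw [h1, h2, h3,
      ← Finset.sum_Ioc_consecutive ρ (show (0:ℕ) ≤ k+2 by omega) (show k+2 ≤ n by omega),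
      ← Finset.sum_Ioc_consecutive ρ (show (0:ℕ) ≤ k+1 by omega) (show k+1 ≤ k+2 by omega)]
    have : ∑ h ∈ Ioc (k+1) (k+2), ρ h = ρ (k+2) := by
      rw [Finset.sum_Ioc_succ_top (le_refl _)]
      simp
    rw [this]
  have hmul : ∑ h ∈ Icc 1 (k+1), ρ h * S (k+2) + ρ (k+2) * S (k+2)
      + ∑ h ∈ Icc (k+3) n, ρ h * S (k+2) = S (k+2) := by
    rw [← Finset.sum_mul, ← Finset.sum_mul, ← add_mul, ← add_mul, part, one_mul]
  linarith [hmul, hSj]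

lemma ubcs_Pdiff (n : ℕ) (T β ρ P : ℕ → ℝ)
    (hρ1 : ∑ h ∈ Icc 1 n, ρ h = 1)
    (hP : ∀ i, 1 ≤ i → i ≤ n →
      P i = ∑ h ∈ Icc 1 (i - 1), ρ h * ∑ g ∈ Icc (h + 1) i, (T (g - 1) - T g) * β (g - 1)
          - ∑ h ∈ Icc (i + 1) n, ρ h * ∑ g ∈ Icc (i + 1) h, (T (g - 1) - T g) * β (g - 1))
    (i : ℕ) (hi : 1 ≤ i) :
    ∀ j, i ≤ j → j ≤ n →
      P j = P i + ∑ g ∈ Icc (i+1) j, (T (g - 1) - T g) * β (g - 1) := by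
  intro j hij hjn
  induction j, hij using Nat.le_induction with
  | base => simp [Finset.Icc_eq_empty (show ¬ (i+1 ≤ i) by omega)]
  | succ j hij ih =>
    rw [ubcs_step n T β ρ P hρ1 hP j (by omega) hjn, ih (by omega),
      Finset.sum_Icc_succ_top (by omega)]
    simp only [Nat.add_sub_cancel]
    ring

lemma telescope (T : ℕ → ℝ) (i : ℕ) :
    ∀ j, i ≤ j → ∑ g ∈ Icc (i+1) j, (T (g-1) - T g) = T i - T j := by
  intro j hij
  induction j, hij using Nat.le_induction with
  | base => simp [Finset.Icc_eq_empty (show ¬ (i+1 ≤ i) by omega)]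
  | succ j hij ih =>
    rw [Finset.sum_Icc_succ_top (by omega), ih]
    simp only [Nat.add_sub_cancel]
    ring

/-- Strategy-proofness part of Theorem 1. -/
theorem ubcs_strategy_proof
    (n : ℕ) (hn : 1 ≤ n)
    (T β ρ P : ℕ → ℝ)
    (hT : ∀ i j, 1 ≤ i → i ≤ j → j ≤ n → T j ≤ T i)
    (hβ0 : 0 ≤ β 0)
    (hβ : ∀ i j, i ≤ j → j ≤ n → β i ≤ β j)
    (hρ : ∀ i, 1 ≤ i → i ≤ n → 0 ≤ ρ i)
    (hρ1 : ∑ h ∈ Icc 1 n, ρ h = 1)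
    (hP : ∀ i, 1 ≤ i → i ≤ n →
      P i = ∑ h ∈ Icc 1 (i - 1), ρ h * ∑ g ∈ Icc (h + 1) i, (T (g - 1) - T g) * β (g - 1)
          - ∑ h ∈ Icc (i + 1) n, ρ h * ∑ g ∈ Icc (i + 1) h, (T (g - 1) - T g) * β (g - 1)) :
    ∀ i, 1 ≤ i → i ≤ n → ∀ b : ℝ, β (i - 1) ≤ b → b ≤ β i →
      ∀ j, 1 ≤ j → j ≤ n → T i * b + P i ≤ T j * b + P j := by
  intro i hi1 hin b hb1 hb2 j hj1 hjn
  rcases le_total i j with hij | hji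
  · have hPd := ubcs_Pdiff n T β ρ P hρ1 hP i hi1 j hij hjn
    have hTd := telescope T i j hij
    have key : 0 ≤ ∑ g ∈ Icc (i+1) j, (T (g-1) - T g) * (β (g-1) - b) := by
      apply Finset.sum_nonneg
      intro g hg
      simp only [Finset.mem_Icc] at hg
      apply mul_nonneg
      · have := hT (g-1) g (by omega) (by omega) (by omega)
        linarith
      · have := hβ i (g-1) (by omega) (by omega)
        linarith
    have expand : ∑ g ∈ Icc (i+1) j, (T (g-1) - T g) * (β (g-1) - b)
        = ∑ g ∈ Icc (i+1) j, (T (g-1) - T g) * β (g-1)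
          - (∑ g ∈ Icc (i+1) j, (T (g-1) - T g)) * b := by
      rw [Finset.sum_mul, ← Finset.sum_sub_distrib]
      exact Finset.sum_congr rfl fun g _ => by ring
    rw [hPd]
    rw [expand, hTd] at key
    linarith
  · have hPd := ubcs_Pdiff n T β ρ P hρ1 hP j hj1 i hji hin
    have hTd := telescope T j i hji
    have key : 0 ≤ ∑ g ∈ Icc (j+1) i, (T (g-1) - T g) * (b - β (g-1)) := by
      apply Finset.sum_nonneg
      intro g hg
      simp only [Finset.mem_Icc] at hg
      apply mul_nonneg
      · have := hT (g-1) g (by omega) (by omega) (by omega)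
        linarith
      · have := hβ (g-1) (i-1) (by omega) (by omega)
        linarith
    have expand : ∑ g ∈ Icc (j+1) i, (T (g-1) - T g) * (b - β (g-1))
        = (∑ g ∈ Icc (j+1) i, (T (g-1) - T g)) * b
          - ∑ g ∈ Icc (j+1) i, (T (g-1) - T g) * β (g-1) := by
      rw [Finset.sum_mul, ← Finset.sum_sub_distrib]
      exact Finset.sum_congr rfl fun g _ => by ring
    rw [hPd]
    rw [expand, hTd] at key
    linarith
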